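/- Let $(\varphi_n)$ be a sequence of continuous real-valued functions on $[a,b]$, and $(\lambda_n)\to\infty$ positive reals. Assume: (i) $\int_a^b \varphi_n^2\,dx \geq c > 0$ for all large $n$; (ii) $\sup_{[a,b]}|\varphi_n| \leq \varepsilon_n\lambda_n^{1/2}$ where $\varepsilon_n\to 0$; (iii) $|\int_a^b \varphi_n\,dx| \leq M\lambda_n^{-1/2}$ for all $n$ for some fixed $M>0$. Then for all sufficiently large $n$, $\int_a^b|\varphi_n|\,dx > |\int_a^b \varphi_n\,dx|$, and hence $\varphi_n$ changes sign on $[a,b]$. -/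

import Mathlib

open Filter

theorem stmt_7 (a b : ℝ) (hab : a < b) (φ : ℕ → ℝ → ℝ) (lam ε : ℕ → ℝ)
    (c M : ℝ)
    (hcont : ∀ n, ContinuousOn (φ n) (Set.Icc a b))
    (hlam : ∀ n, 0 < lam n)
    (hlaminf : Filter.Tendsto lam Filter.atTop Filter.atTop)
    (hc : 0 < c)
    (hlow : ∀ᶠ n in Filter.atTop, c ≤ ∫ x in a..b, (φ n x) ^ 2)
    (hε : Filter.Tendsto ε Filter.atTop (nhds 0))
    (hsup : ∀ n, ∀ x ∈ Set.Icc a b, |φ n x| ≤ ε n * (lam n) ^ ((1 : ℝ) / 2))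
    (hM : 0 < M)
    (hint : ∀ n, |∫ x in a..b, φ n x| ≤ M * (lam n) ^ (-(1 : ℝ) / 2)) :
    ∀ᶠ n in Filter.atTop,
      (|∫ x in a..b, φ n x| < ∫ x in a..b, |φ n x|) ∧
      (∃ x ∈ Set.Icc a b, 0 < φ n x) ∧ ∃ y ∈ Set.Icc a b, φ n y < 0 := by
  have hεsmall : ∀ᶠ n in Filter.atTop, ε n < c / M :=
    hε.eventually_lt_const (by positivity)
  filter_upwards [hlow, hεsmall] with n hlown hεn
  have huIcc : Set.uIcc a b = Set.Icc a b := Set.uIcc_of_le hab.le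
  have hIntφ : IntervalIntegrable (φ n) MeasureTheory.volume a b :=
    ((hcont n).mono huIcc.subset).intervalIntegrable
  have hIntabs : IntervalIntegrable (fun x => |φ n x|) MeasureTheory.volume a b :=
    hIntφ.abs
  set s : ℝ := (lam n) ^ ((1 : ℝ) / 2) with hs
  have hspos : 0 < s := Real.rpow_pos_of_pos (hlam n) _
  have hIabs : 0 ≤ ∫ x in a..b, |φ n x| :=
    intervalIntegral.integral_nonneg hab.le (fun x _ => abs_nonneg _)
  -- key bound : ∫ φ² ≤ (ε n * s) * ∫ |φ|
  have hkey : (∫ x in a..b, (φ n x) ^ 2) ≤ (ε n * s) * ∫ x in a..b, |φ n x| := by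
    have h1 : (∫ x in a..b, (φ n x) ^ 2) ≤ ∫ x in a..b, (ε n * s) * |φ n x| := by
      apply intervalIntegral.integral_mono_on hab.le
      · exact (((hcont n).pow 2).mono huIcc.subset).intervalIntegrable
      · exact hIntabs.const_mul _
      · intro x hx
        have h2 : |φ n x| ≤ ε n * s := hsup n x hx
        calc (φ n x) ^ 2 = |φ n x| * |φ n x| := by rw [← sq_abs]; ring
          _ ≤ (ε n * s) * |φ n x| := mul_le_mul_of_nonneg_right h2 (abs_nonneg _)
    rwa [intervalIntegral.integral_const_mul] at h1
  have hmain : |∫ x in a..b, φ n x| < ∫ x in a..b, |φ n x| := by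
    by_contra hcon
    push_neg at hcon
    have hI' : (∫ x in a..b, |φ n x|) ≤ M * (lam n) ^ (-(1 : ℝ) / 2) :=
      hcon.trans (hint n)
    have hsinv : (lam n) ^ (-(1 : ℝ) / 2) = s⁻¹ := by
      rw [hs, ← Real.rpow_neg (hlam n).le]
      norm_num
    rcases le_or_gt (ε n) 0 with hε0 | hε0
    · have : (ε n * s) * (∫ x in a..b, |φ n x|) ≤ 0 :=
        mul_nonpos_of_nonpos_of_nonneg (mul_nonpos_of_nonpos_of_nonneg hε0 hspos.le) hIabs
      linarith
    · have h3 : (ε n * s) * (∫ x in a..b, |φ n x|) ≤ (ε n * s) * (M * s⁻¹) := by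
        apply mul_le_mul_of_nonneg_left _ (by positivity)
        rw [hsinv] at hI'; exact hI'
      have h4 : (ε n * s) * (M * s⁻¹) = ε n * M := by
        field_simp
      have h5 : ε n * M < c := (lt_div_iff₀ hM).mp hεn
      linarith
  refine ⟨hmain, ?_, ?_⟩
  · by_contra hpos
    push_neg at hpos
    have heq : (∫ x in a..b, |φ n x|) = ∫ x in a..b, -(φ n x) := by
      apply intervalIntegral.integral_congr
      intro x hx
      exact abs_of_nonpos (hpos x (huIcc ▸ hx))
    rw [heq, intervalIntegral.integral_neg] at hmain
    have := neg_le_abs (∫ x in a..b, φ n x)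
    linarith
  · by_contra hneg
    push_neg at hneg
    have heq : (∫ x in a..b, |φ n x|) = ∫ x in a..b, φ n x := by
      apply intervalIntegral.integral_congr
      intro x hx
      exact abs_of_nonneg (hneg x (huIcc ▸ hx))
    rw [heq] at hmain
    have := le_abs_self (∫ x in a..b, φ n x)
    linarith
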